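/- Let E*_n = {(a,b) in N^2 : 1 <= a+b <= n} with the componentwise order. For n >= 3, the number of bi-signed n-chains in E*_n (chains of cardinality n containing at least one element of positive signature a-b > 0 and at least one element of negative signature a-b < 0) equals 2^n - 2*binomial(n, floor(n/2)). -/

import Mathlib

namespace BisignedAux

variable {n : ℕ}

def ext (w : Fin n → Bool) (i : ℕ) : Bool := if h : i < n then w ⟨i, h⟩ else false

def ones (w : Fin n → Bool) (k : ℕ) : ℕ :=
  ((Finset.range k).filter (fun i => ext w i = true)).card

lemma ones_zero (w : Fin n → Bool) : ones w 0 = 0 := by simp [ones]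

lemma ones_succ (w : Fin n → Bool) (k : ℕ) :
    ones w (k+1) = ones w k + if ext w k then 1 else 0 := by
  unfold ones
  rw [Finset.range_add_one, Finset.filter_insert]
  by_cases h : ext w k = true
  · rw [if_pos h, Finset.card_insert_of_notMem (by simp)]
    simp [h]
  · simp [h]

lemma ones_le (w : Fin n → Bool) (k : ℕ) : ones w k ≤ k :=
  le_trans (Finset.card_filter_le _ _) (by simp)

lemma ones_mono (w : Fin n → Bool) {k l : ℕ} (h : k ≤ l) : ones w k ≤ ones w l :=
  Finset.card_le_card (Finset.filter_subset_filter _ (by simpa [Finset.range_subset_range] using h))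

lemma ones_le_add (w : Fin n → Bool) {k l : ℕ} (h : k ≤ l) : ones w l ≤ ones w k + (l - k) := by
  induction l, h using Nat.le_induction with
  | base => simp
  | succ l hl ih =>
      have h1 := ones_succ w l
      have : ones w (l+1) ≤ ones w l + 1 := by split at h1 <;> omega
      omega

/-- goodness: every prefix has at most half trues. -/
def Good (w : Fin n → Bool) : Prop := ∀ k ≤ n, 2 * ones w k ≤ k

instance (w : Fin n → Bool) : Decidable (Good w) := Nat.decidableBallLE n _

def G (n t : ℕ) : ℕ :=
  (Finset.univ.filter fun w : Fin n → Bool => Good w ∧ ones w n = t).card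

lemma ext_snoc (w : Fin n → Bool) (b : Bool) (i : ℕ) (hi : i < n) :
    ext (Fin.snoc w b) i = ext w i := by
  simp only [ext, dif_pos hi, dif_pos (Nat.lt_succ_of_lt hi)]
  have : (⟨i, Nat.lt_succ_of_lt hi⟩ : Fin (n+1)) = Fin.castSucc ⟨i, hi⟩ := rfl
  rw [this, Fin.snoc_castSucc]

lemma ext_snoc_last (w : Fin n → Bool) (b : Bool) :
    ext (Fin.snoc w b) n = b := by
  simp only [ext, dif_pos (Nat.lt_succ_self n)]
  have : (⟨n, Nat.lt_succ_self n⟩ : Fin (n+1)) = Fin.last n := rfl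
  rw [this, Fin.snoc_last]

lemma ones_snoc (w : Fin n → Bool) (b : Bool) {k : ℕ} (hk : k ≤ n) :
    ones (Fin.snoc w b) k = ones w k := by
  unfold ones
  congr 1
  apply Finset.filter_congr
  intro i hi
  rw [Finset.mem_range] at hi
  rw [ext_snoc w b i (lt_of_lt_of_le hi hk)]

lemma ones_snoc_top (w : Fin n → Bool) (b : Bool) :
    ones (Fin.snoc w b) (n+1) = ones w n + if b then 1 else 0 := by
  rw [ones_succ, ones_snoc w b (le_refl n), ext_snoc_last]

lemma good_snoc (w : Fin n → Bool) (b : Bool) :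
    Good (Fin.snoc w b) ↔ Good w ∧ 2 * (ones w n + if b then 1 else 0) ≤ n + 1 := by
  constructor
  · intro h
    refine ⟨fun k hk => ?_, ?_⟩
    · have := h k (le_trans hk (Nat.le_succ n)); rwa [ones_snoc w b hk] at this
    · have := h (n+1) (le_refl _); rwa [ones_snoc_top] at this
  · rintro ⟨h1, h2⟩ k hk
    by_cases hk' : k ≤ n
    · rw [ones_snoc w b hk']; exact h1 k hk'
    · have : k = n + 1 := by omega
      subst this; rwa [ones_snoc_top]

lemma good_total (w : Fin n → Bool) (h : Good w) : 2 * ones w n ≤ n := h n (le_refl n)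

lemma card_filter_succ (P : (Fin (n+1) → Bool) → Prop) [DecidablePred P] :
    (Finset.univ.filter P).card =
      (Finset.univ.filter fun w : Fin n → Bool => P (Fin.snoc w false)).card +
      (Finset.univ.filter fun w : Fin n → Bool => P (Fin.snoc w true)).card := by
  rw [Finset.card_filter, Finset.card_filter, Finset.card_filter]
  rw [← Equiv.sum_comp (Fin.snocEquiv (fun _ => Bool)) (fun w => if P w then 1 else 0)]
  rw [Fintype.sum_prod_type]
  rw [Fintype.univ_bool]
  rw [show ({true, false} : Finset Bool) = insert true {false} from rfl,
    Finset.sum_insert (by simp), Finset.sum_singleton]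
  simp only [Fin.snocEquiv, Equiv.coe_fn_mk]
  rw [Nat.add_comm]
  rfl


lemma G_zero (t : ℕ) : G 0 t = if t = 0 then 1 else 0 := by
  unfold G
  split
  · next h =>
      subst h
      rw [Finset.filter_true_of_mem, Finset.card_univ]
      · simp
      · intro w _
        exact ⟨fun k hk => by interval_cases k <;> simp [ones_zero], ones_zero w⟩
  · next h =>
      rw [Finset.card_eq_zero, Finset.filter_eq_empty_iff]
      intro w _
      rintro ⟨-, h2⟩
      rw [ones_zero] at h2
      omega

lemma G_vanish {n t : ℕ} (h : n < 2 * t) : G n t = 0 := by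
  rw [G, Finset.card_eq_zero, Finset.filter_eq_empty_iff]
  rintro w _ ⟨h1, h2⟩
  have := good_total w h1
  omega

lemma G_succ (n t : ℕ) :
    G (n+1) t = G n t + if 1 ≤ t ∧ 2 * t ≤ n + 1 then G n (t-1) else 0 := by
  unfold G
  rw [card_filter_succ]
  congr 1
  · apply congrArg Finset.card
    apply Finset.filter_congr
    intro w _
    rw [good_snoc, ones_snoc_top]
    simp only [if_neg (by simp : ¬ (false = true)), Nat.add_zero]
    constructor
    · rintro ⟨⟨h1, h2⟩, h3⟩; exact ⟨h1, h3⟩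
    · rintro ⟨h1, h2⟩; exact ⟨⟨h1, by have := good_total w h1; omega⟩, h2⟩
  · by_cases hc : 1 ≤ t ∧ 2 * t ≤ n + 1
    · rw [if_pos hc]
      apply congrArg Finset.card
      apply Finset.filter_congr
      intro w _
      rw [good_snoc, ones_snoc_top]
      simp only [↓reduceIte]
      constructor
      · rintro ⟨⟨h1, h2⟩, h3⟩; exact ⟨h1, by omega⟩
      · rintro ⟨h1, h2⟩
        have := good_total w h1
        exact ⟨⟨h1, by omega⟩, by omega⟩
    · rw [if_neg hc, Finset.card_eq_zero, Finset.filter_eq_empty_iff]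
      intro w _
      rw [good_snoc, ones_snoc_top]
      simp only [↓reduceIte]
      rintro ⟨⟨h1, h2⟩, h3⟩
      exact hc ⟨by omega, by omega⟩

lemma G_zero_t (n : ℕ) : G n 0 = 1 := by
  induction n with
  | zero => simp [G_zero]
  | succ n ih => rw [G_succ, if_neg (by omega)]; omega

lemma G_val (n : ℕ) : ∀ t, 1 ≤ t → 2 * t ≤ n → G n t + n.choose (t - 1) = n.choose t := by
  induction n with
  | zero => intro t h1 h2; omega
  | succ n ih =>
    rintro (_ | s) h1 h2
    · omega
    · rw [G_succ, if_pos ⟨by omega, by omega⟩]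
      simp only [Nat.add_sub_cancel]
      have pascal1 : (n+1).choose (s+1) = n.choose s + n.choose (s+1) :=
        Nat.choose_succ_succ n s
      by_cases hn : 2 * (s+1) ≤ n
      · have e1 := ih (s+1) (by omega) hn
        simp only [Nat.add_sub_cancel] at e1
        match s, h2, hn, e1, pascal1 with
        | 0, h2, hn, e1, pascal1 =>
            have g0 := G_zero_t n
            simp only [Nat.choose_zero_right, Nat.choose_one_right] at *
            omega
        | r+1, h2, hn, e1, pascal1 =>
            have e2 := ih (r+1) (by omega) (by omega)
            simp only [Nat.add_sub_cancel] at e2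
            have pascal2 : (n+1).choose (r+1) = n.choose r + n.choose (r+1) :=
              Nat.choose_succ_succ n r
            omega
      · have hn1 : 2 * (s+1) = n + 1 := by omega
        have hz : G n (s+1) = 0 := G_vanish (by omega)
        have hsym : n.choose (s+1) = n.choose s := by
          rw [← Nat.choose_symm (show s+1 ≤ n by omega)]
          congr 1
          omega
        match s, h2, hn1, hz, hsym, pascal1 with
        | 0, h2, hn1, hz, hsym, pascal1 =>
            have : n = 1 := by omega
            subst this
            simp_all [G_zero_t]
        | r+1, h2, hn1, hz, hsym, pascal1 =>
            have e2 := ih (r+1) (by omega) (by omega)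
            simp only [Nat.add_sub_cancel] at e2
            have pascal2 : (n+1).choose (r+1) = n.choose r + n.choose (r+1) :=
              Nat.choose_succ_succ n r
            omega

lemma sum_G (n : ℕ) : ∀ m, m ≤ n/2 → ∑ t ∈ Finset.range (m+1), G n t = n.choose m := by
  intro m
  induction m with
  | zero => intro _; simpa using G_zero_t n
  | succ m ih =>
    intro h
    rw [Finset.sum_range_succ, ih (by omega)]
    have := G_val n (m+1) (by omega) (by omega)
    simp only [Nat.add_sub_cancel] at this
    omega

lemma Bcard (n : ℕ) :
    (Finset.univ.filter fun w : Fin n → Bool => Good w).card = n.choose (n/2) := by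
  rw [Finset.card_eq_sum_card_fiberwise
    (f := fun w => ones w n) (t := Finset.range (n+1))
    (fun w _ => Finset.mem_range.mpr (Nat.lt_succ_of_le (ones_le w n)))]
  have he : ∀ t, ((Finset.univ.filter fun w : Fin n → Bool => Good w).filter
      fun w => ones w n = t) = Finset.univ.filter fun w => Good w ∧ ones w n = t := by
    intro t; rw [Finset.filter_filter]
  have : ∑ t ∈ Finset.range (n+1),
      ((Finset.univ.filter fun w : Fin n → Bool => Good w).filter fun w => ones w n = t).card
      = ∑ t ∈ Finset.range (n+1), G n t := by
    apply Finset.sum_congr rfl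
    intro t _
    rw [he t]
    rfl
  rw [this, ← Finset.sum_subset (Finset.range_subset_range.mpr (show n/2+1 ≤ n+1 by omega))
    (fun t _ ht => G_vanish (by
      rw [Finset.mem_range] at *
      have : n/2 + 1 ≤ t := by omega
      omega))]
  exact sum_G n (n/2) (le_refl _)


def High (w : Fin n → Bool) : Prop := ∀ k ≤ n, k ≤ 2 * ones w k

instance (w : Fin n → Bool) : Decidable (High w) := Nat.decidableBallLE n _

def Bis (w : Fin n → Bool) : Prop :=
  (∃ s, 1 ≤ s ∧ s ≤ n ∧ s < 2 * ones w s) ∧ (∃ s, 1 ≤ s ∧ s ≤ n ∧ 2 * ones w s < s)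

instance (w : Fin n → Bool) : Decidable (Bis w) := by
  have h1 : (∃ s, 1 ≤ s ∧ s ≤ n ∧ s < 2 * ones w s) ↔
      ¬ (∀ s ≤ n, ¬ (1 ≤ s ∧ s < 2 * ones w s)) := by
    push_neg
    constructor
    · rintro ⟨s, a, b, c⟩; exact ⟨s, b, a, c⟩
    · rintro ⟨s, b, a, c⟩; exact ⟨s, a, b, c⟩
  have h2 : (∃ s, 1 ≤ s ∧ s ≤ n ∧ 2 * ones w s < s) ↔
      ¬ (∀ s ≤ n, ¬ (1 ≤ s ∧ 2 * ones w s < s)) := by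
    push_neg
    constructor
    · rintro ⟨s, a, b, c⟩; exact ⟨s, b, a, c⟩
    · rintro ⟨s, b, a, c⟩; exact ⟨s, a, b, c⟩
  exact decidable_of_iff _ (Iff.and h1.symm h2.symm)

lemma not_bis (w : Fin n → Bool) : ¬ Bis w ↔ Good w ∨ High w := by
  constructor
  · intro h
    rcases not_and_or.mp h with h | h
    · push_neg at h
      left
      intro k hk
      rcases Nat.eq_zero_or_pos k with rfl | hk1
      · simp [ones_zero]
      · exact h k hk1 hk
    · push_neg at h
      right
      intro k hk
      rcases Nat.eq_zero_or_pos k with rfl | hk1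
      · omega
      · exact h k hk1 hk
  · rintro (h | h) ⟨⟨s, h1, h2, h3⟩, ⟨t, g1, g2, g3⟩⟩
    · exact absurd (h s h2) (by omega)
    · exact absurd (h t g2) (by omega)

def wneg (w : Fin n → Bool) : Fin n → Bool := fun i => !(w i)

lemma ext_neg (w : Fin n → Bool) {i : ℕ} (hi : i < n) : ext (wneg w) i = !(ext w i) := by
  simp [ext, dif_pos hi, wneg]

lemma ones_neg (w : Fin n → Bool) : ∀ k, k ≤ n → ones (wneg w) k + ones w k = k := by
  intro k
  induction k with
  | zero => intro _; simp [ones_zero]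
  | succ k ih =>
      intro hk
      rw [ones_succ, ones_succ, ext_neg w (by omega)]
      have := ih (by omega)
      cases h : ext w k <;> simp [h] <;> omega

lemma good_neg (w : Fin n → Bool) : Good (wneg w) ↔ High w := by
  constructor
  · intro h k hk
    have h1 := h k hk
    have h2 := ones_neg w k hk
    omega
  · intro h k hk
    have h1 := h k hk
    have h2 := ones_neg w k hk
    omega

lemma wneg_wneg (w : Fin n → Bool) : wneg (wneg w) = w := by
  funext i; simp [wneg]

lemma card_high :
    (Finset.univ.filter fun w : Fin n → Bool => High w).card
      = (Finset.univ.filter fun w : Fin n → Bool => Good w).card := by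
  apply Finset.card_nbij' (i := fun w => wneg w) (j := fun w => wneg w)
  · intro w hw
    simp only [Finset.mem_coe, Finset.mem_filter, Finset.mem_univ, true_and] at *
    rw [good_neg]; exact hw
  · intro w hw
    simp only [Finset.mem_coe, Finset.mem_filter, Finset.mem_univ, true_and] at *
    rw [← good_neg, wneg_wneg]; exact hw
  · intro w _; exact wneg_wneg w
  · intro w _; exact wneg_wneg w

lemma card_bis (hn : 1 ≤ n) :
    (Finset.univ.filter fun w : Fin n → Bool => Bis w).card + 2 * n.choose (n/2) = 2 ^ n := by
  have hsplit := Finset.card_filter_add_card_filter_not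
    (s := (Finset.univ : Finset (Fin n → Bool))) (p := fun w => Bis w)
  have huniv : (Finset.univ : Finset (Fin n → Bool)).card = 2 ^ n := by
    simp [Finset.card_univ]
  have hcong : (Finset.univ.filter fun w : Fin n → Bool => ¬ Bis w)
      = Finset.univ.filter fun w => Good w ∨ High w := by
    apply Finset.filter_congr
    intro w _
    exact not_bis w
  have hdisj : Disjoint (Finset.univ.filter fun w : Fin n → Bool => Good w)
      (Finset.univ.filter fun w : Fin n → Bool => High w) := by
    rw [Finset.disjoint_filter]
    intro w _ hg hh
    have h1 := hg 1 hn
    have h2 := hh 1 hn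
    omega
  have hunion : (Finset.univ.filter fun w : Fin n → Bool => Good w ∨ High w)
      = (Finset.univ.filter fun w : Fin n → Bool => Good w)
        ∪ (Finset.univ.filter fun w : Fin n → Bool => High w) := Finset.filter_or _ _ _
  have hcup := Finset.card_union_of_disjoint hdisj
  have h2 : (Finset.univ.filter fun w : Fin n → Bool => ¬ Bis w).card
      = 2 * n.choose (n/2) := by
    rw [hcong, hunion, hcup, card_high, Bcard]
    omega
  rw [h2] at hsplit
  omega


def pt (w : Fin n → Bool) (s : ℕ) : ℕ × ℕ := (ones w s, s - ones w s)

lemma pt_sum (w : Fin n → Bool) (s : ℕ) : (pt w s).1 + (pt w s).2 = s := by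
  have := ones_le w s; simp only [pt]; omega

def chainOf (w : Fin n → Bool) : Finset (ℕ × ℕ) :=
  (Finset.range n).image fun k => pt w (k+1)

lemma mem_chainOf {w : Fin n → Bool} {p : ℕ × ℕ} :
    p ∈ chainOf w ↔ ∃ s, 1 ≤ s ∧ s ≤ n ∧ pt w s = p := by
  simp only [chainOf, Finset.mem_image, Finset.mem_range]
  constructor
  · rintro ⟨k, hk, rfl⟩; exact ⟨k+1, by omega, by omega, rfl⟩
  · rintro ⟨s, h1, h2, rfl⟩
    refine ⟨s-1, by omega, ?_⟩
    congr 1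
    omega

lemma card_chainOf (w : Fin n → Bool) : (chainOf w).card = n := by
  rw [chainOf, Finset.card_image_of_injOn, Finset.card_range]
  intro a _ b _ hab
  simp only at hab
  have h2 : a + 1 = b + 1 := by rw [← pt_sum w (a+1), ← pt_sum w (b+1), hab]
  omega

lemma chain_chainOf (w : Fin n → Bool) : IsChain (· ≤ ·) ((chainOf w : Finset (ℕ × ℕ)) : Set (ℕ × ℕ)) := by
  intro p hp q hq _
  rw [Finset.mem_coe, mem_chainOf] at hp hq
  obtain ⟨s, hs1, hs2, rfl⟩ := hp
  obtain ⟨t, ht1, ht2, rfl⟩ := hq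
  have hst := ones_le w s
  have htt := ones_le w t
  rcases le_total s t with h | h
  · left
    have h1 := ones_mono w h
    have h2 := ones_le_add w h
    exact Prod.mk_le_mk.mpr ⟨h1, by omega⟩
  · right
    have h1 := ones_mono w h
    have h2 := ones_le_add w h
    exact Prod.mk_le_mk.mpr ⟨h1, by omega⟩

lemma pos_chainOf (w : Fin n → Bool) :
    (∃ p ∈ chainOf w, p.2 < p.1) ↔ ∃ s, 1 ≤ s ∧ s ≤ n ∧ s < 2 * ones w s := by
  constructor
  · rintro ⟨p, hp, h⟩
    rw [mem_chainOf] at hp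
    obtain ⟨s, h1, h2, rfl⟩ := hp
    have := ones_le w s
    simp only [pt] at h
    exact ⟨s, h1, h2, by omega⟩
  · rintro ⟨s, h1, h2, h3⟩
    have := ones_le w s
    exact ⟨pt w s, mem_chainOf.mpr ⟨s, h1, h2, rfl⟩, by simp only [pt]; omega⟩

lemma neg_chainOf (w : Fin n → Bool) :
    (∃ p ∈ chainOf w, p.1 < p.2) ↔ ∃ s, 1 ≤ s ∧ s ≤ n ∧ 2 * ones w s < s := by
  constructor
  · rintro ⟨p, hp, h⟩
    rw [mem_chainOf] at hp
    obtain ⟨s, h1, h2, rfl⟩ := hp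
    have := ones_le w s
    simp only [pt] at h
    exact ⟨s, h1, h2, by omega⟩
  · rintro ⟨s, h1, h2, h3⟩
    have := ones_le w s
    exact ⟨pt w s, mem_chainOf.mpr ⟨s, h1, h2, rfl⟩, by simp only [pt]; omega⟩

lemma ext_lt (w : Fin n → Bool) {i : ℕ} (hi : i < n) : ext w i = w ⟨i, hi⟩ := dif_pos hi

lemma chainOf_inj {w w' : Fin n → Bool} (h : chainOf w = chainOf w') : w = w' := by
  have hones : ∀ s, s ≤ n → ones w s = ones w' s := by
    intro s hs
    rcases Nat.eq_zero_or_pos s with rfl | h1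
    · rw [ones_zero, ones_zero]
    · have hp : pt w s ∈ chainOf w' := h ▸ mem_chainOf.mpr ⟨s, h1, hs, rfl⟩
      rw [mem_chainOf] at hp
      obtain ⟨t, ht1, ht2, hpt⟩ := hp
      have hts : t = s := by rw [← pt_sum w' t, hpt, pt_sum]
      subst hts
      exact (congrArg Prod.fst hpt).symm
  funext i
  have e1 := ones_succ w (i : ℕ)
  have e2 := ones_succ w' (i : ℕ)
  rw [ext_lt w i.isLt] at e1
  rw [ext_lt w' i.isLt] at e2
  simp only [Fin.eta] at e1 e2
  have o1 := hones (i : ℕ) (le_of_lt i.isLt)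
  have o2 := hones ((i : ℕ) + 1) i.isLt
  cases h1 : w i <;> cases h2 : w' i <;> rw [h1] at e1 <;> rw [h2] at e2 <;>
    simp only [↓reduceIte, Bool.false_eq_true, if_false, if_true] at e1 e2 <;>
    first | rfl | omega

lemma chainOf_surj (S : Finset (ℕ × ℕ)) (hcard : S.card = n)
    (hb : ∀ p ∈ S, 1 ≤ p.1 + p.2 ∧ p.1 + p.2 ≤ n)
    (hch : IsChain (· ≤ ·) (S : Set (ℕ × ℕ))) :
    ∃ w : Fin n → Bool, chainOf w = S := by
  classical
  have hinj : Set.InjOn (fun p : ℕ × ℕ => p.1 + p.2) S := by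
    intro p hp q hq hpq
    simp only at hpq
    by_contra hne
    rcases hch hp hq hne with hle | hle
    · have h2 := Prod.le_def.mp hle
      exact hne (Prod.ext (by omega) (by omega))
    · have h2 := Prod.le_def.mp hle
      exact hne (Prod.ext (by omega) (by omega))
  have himg : S.image (fun p => p.1 + p.2) = Finset.Icc 1 n := by
    apply Finset.eq_of_subset_of_card_le
    · intro s hs
      simp only [Finset.mem_image] at hs
      obtain ⟨p, hp, rfl⟩ := hs
      exact Finset.mem_Icc.mpr (hb p hp)
    · rw [Finset.card_image_of_injOn hinj, hcard, Nat.card_Icc]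
      omega
  have hex : ∀ s, 1 ≤ s → s ≤ n → ∃ p ∈ S, p.1 + p.2 = s := by
    intro s h1 h2
    have hmem : s ∈ S.image (fun p => p.1 + p.2) := by
      rw [himg]; exact Finset.mem_Icc.mpr ⟨h1, h2⟩
    simpa using hmem
  set f : ℕ → ℕ × ℕ := fun s => if h : ∃ p ∈ S, p.1 + p.2 = s then h.choose else (0, 0) with hf
  have hfS : ∀ s, 1 ≤ s → s ≤ n → f s ∈ S ∧ (f s).1 + (f s).2 = s := by
    intro s h1 h2
    have h := hex s h1 h2
    rw [hf]
    simp only [dif_pos h]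
    exact h.choose_spec
  have hf0 : f 0 = (0, 0) := by
    rw [hf]
    simp only []
    rw [dif_neg]
    rintro ⟨p, hp, hps⟩
    have := hb p hp
    omega
  have hstep : ∀ s, s + 1 ≤ n → (f s).1 ≤ (f (s+1)).1 ∧ (f (s+1)).1 ≤ (f s).1 + 1 := by
    intro s hs
    rcases Nat.eq_zero_or_pos s with rfl | h1
    · obtain ⟨hmem, hsum⟩ := hfS 1 (le_refl _) hs
      show (f 0).1 ≤ (f 1).1 ∧ (f 1).1 ≤ (f 0).1 + 1
      rw [hf0]
      omega
    · obtain ⟨hm1, hs1⟩ := hfS s h1 (by omega)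
      obtain ⟨hm2, hs2⟩ := hfS (s+1) (by omega) hs
      have hne : f s ≠ f (s+1) := by
        intro e; rw [e] at hs1; omega
      rcases hch hm1 hm2 hne with hle | hle
      · have h2 := Prod.le_def.mp hle; omega
      · have h2 := Prod.le_def.mp hle; omega
  set w : Fin n → Bool := fun i => decide ((f ((i : ℕ) + 1)).1 = (f (i : ℕ)).1 + 1) with hw
  have hones : ∀ s, s ≤ n → ones w s = (f s).1 := by
    intro s
    induction s with
    | zero => intro _; rw [ones_zero, hf0]
    | succ s ih =>
        intro hs
        have ihs := ih (by omega)
        rw [ones_succ, ext_lt w (show s < n by omega)]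
        have hstep' := hstep s hs
        have hwv : w ⟨s, by omega⟩ = decide ((f (s + 1)).1 = (f s).1 + 1) := rfl
        rw [hwv]
        simp only [decide_eq_true_eq]
        by_cases hd : (f (s+1)).1 = (f s).1 + 1
        · rw [if_pos hd]
          omega
        · rw [if_neg hd]
          omega
  refine ⟨w, ?_⟩
  apply Finset.eq_of_subset_of_card_le
  · intro p hp
    rw [mem_chainOf] at hp
    obtain ⟨s, h1, h2, rfl⟩ := hp
    obtain ⟨hmem, hsum⟩ := hfS s h1 h2
    have hpt : pt w s = f s := by
      have ho := hones s h2
      exact Prod.ext ho (by simp only [pt]; omega)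
    rw [hpt]
    exact hmem
  · rw [card_chainOf, hcard]

theorem main (n : ℕ) (hn : 3 ≤ n) :
    Nat.card {S : Finset (ℕ × ℕ) // S.card = n ∧
      (∀ p ∈ S, 1 ≤ p.1 + p.2 ∧ p.1 + p.2 ≤ n) ∧
      IsChain (· ≤ ·) (S : Set (ℕ × ℕ)) ∧
      (∃ p ∈ S, p.2 < p.1) ∧ (∃ p ∈ S, p.1 < p.2)} = 2 ^ n - 2 * n.choose (n / 2) := by
  classical
  set Φ : {w : Fin n → Bool // Bis w} → {S : Finset (ℕ × ℕ) // S.card = n ∧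
      (∀ p ∈ S, 1 ≤ p.1 + p.2 ∧ p.1 + p.2 ≤ n) ∧
      IsChain (· ≤ ·) (S : Set (ℕ × ℕ)) ∧
      (∃ p ∈ S, p.2 < p.1) ∧ (∃ p ∈ S, p.1 < p.2)} :=
    fun x => ⟨chainOf x.1, card_chainOf x.1,
      (by
        intro p hp
        rw [mem_chainOf] at hp
        obtain ⟨s, h1, h2, rfl⟩ := hp
        rw [pt_sum]
        exact ⟨h1, h2⟩),
      chain_chainOf x.1,
      (pos_chainOf x.1).mpr x.2.1,
      (neg_chainOf x.1).mpr x.2.2⟩ with hPhi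
  have hbij : Function.Bijective Φ := by
    constructor
    · intro a b hab
      apply Subtype.ext
      apply chainOf_inj (n := n)
      exact congrArg Subtype.val hab
    · rintro ⟨S, hcard, hb, hch, hpos, hneg⟩
      obtain ⟨w, rfl⟩ := chainOf_surj S hcard hb hch
      exact ⟨⟨w, (pos_chainOf w).mp hpos, (neg_chainOf w).mp hneg⟩, rfl⟩
  rw [← Nat.card_eq_of_bijective Φ hbij, Nat.card_eq_fintype_card, Fintype.card_subtype]
  have := card_bis (n := n) (by omega)
  omega

end BisignedAux

/-- For `n ≥ 3`, the number of bi-signed `n`-chains in `E*_n` (chains of cardinality `n`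
containing an element of positive signature and one of negative signature) is
`2 ^ n - 2 * n.choose (n / 2)`. -/
theorem count_bisigned_chains (n : ℕ) (hn : 3 ≤ n) :
    Nat.card {S : Finset (ℕ × ℕ) // S.card = n ∧
      (∀ p ∈ S, 1 ≤ p.1 + p.2 ∧ p.1 + p.2 ≤ n) ∧
      IsChain (· ≤ ·) (S : Set (ℕ × ℕ)) ∧
      (∃ p ∈ S, p.2 < p.1) ∧ (∃ p ∈ S, p.1 < p.2)} = 2 ^ n - 2 * n.choose (n / 2) := by
  exact BisignedAux.main n hn
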